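/- If 0 < α < 2/3 and S ⊆ [m] has size k, then for every matrix M' ∈ ℝ^{n×m}, the Frobenius norm satisfies ‖M' Q^S‖² = ‖M'‖² - α(2-α)‖M' D^S‖² + (α/k)(3α-2)‖M' δ^S‖² ≤ ‖M'‖², where Q^S = I_m - α D^S - (α/k) δ^S (δ^S)^⊤. -/
import Mathlib

open Matrix BigOperators

/-- Frobenius norm `‖M‖ = Tr(Mᵀ M)^{1/2}`. -/
noncomputable def frob {a b : ℕ} (M : Matrix (Fin a) (Fin b) ℝ) : ℝ :=
  Real.sqrt (Matrix.trace (Mᵀ * M))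

/-- Indicator column vector of `S ⊆ [m]`. -/
def dvec {m : ℕ} (S : Finset (Fin m)) : Matrix (Fin m) (Fin 1) ℝ :=
  Matrix.of fun j _ => if j ∈ S then 1 else 0

/-- Diagonal 0/1 matrix indicating `S ⊆ [m]`. -/
def Dmat {m : ℕ} (S : Finset (Fin m)) : Matrix (Fin m) (Fin m) ℝ :=
  Matrix.diagonal fun j => if j ∈ S then 1 else 0

/-- The matrix `Q^S = I_m - α D^S - (α/k) δ^S (δ^S)ᵀ`. -/
noncomputable def Qmat {m : ℕ} (S : Finset (Fin m)) (α : ℝ) (k : ℕ) :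
    Matrix (Fin m) (Fin m) ℝ :=
  1 - α • Dmat S - (α / (k : ℝ)) • (dvec S * (dvec S)ᵀ)

lemma trace_conj_nonneg {a b : ℕ} (M : Matrix (Fin a) (Fin b) ℝ) :
    0 ≤ Matrix.trace (Mᵀ * M) := by
  rw [Matrix.trace]
  refine Finset.sum_nonneg fun i _ => ?_
  rw [Matrix.diag_apply, Matrix.mul_apply]
  exact Finset.sum_nonneg fun j _ => by
    simpa [Matrix.transpose_apply] using mul_self_nonneg (M j i)

lemma frob_sq {a b : ℕ} (M : Matrix (Fin a) (Fin b) ℝ) :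
    frob M ^ 2 = Matrix.trace (Mᵀ * M) := by
  rw [frob, Real.sq_sqrt (trace_conj_nonneg M)]

lemma Dmat_symm {m : ℕ} (S : Finset (Fin m)) : (Dmat S)ᵀ = Dmat S := by
  simp [Dmat, Matrix.diagonal_transpose]

lemma Dmat_sq {m : ℕ} (S : Finset (Fin m)) : Dmat S * Dmat S = Dmat S := by
  simp only [Dmat, Matrix.diagonal_mul_diagonal]
  ext i j
  by_cases h : i ∈ S <;> simp [Matrix.diagonal_apply, h]

lemma Dmat_dvec {m : ℕ} (S : Finset (Fin m)) : Dmat S * dvec S = dvec S := by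
  ext i j
  simp only [Dmat, Matrix.diagonal_mul, dvec, Matrix.of_apply]
  by_cases h : i ∈ S <;> simp [h]

lemma dvecT_dvec {m k : ℕ} (S : Finset (Fin m)) (hS : S.card = k) :
    (dvec S)ᵀ * dvec S = (k : ℝ) • 1 := by
  ext i j
  fin_cases i; fin_cases j
  simp only [Matrix.mul_apply, Matrix.transpose_apply, dvec, Matrix.of_apply]
  rw [Matrix.smul_apply, Matrix.one_apply_eq]
  simp only [smul_eq_mul, mul_one]
  have h1 : ∀ x : Fin m, ((if x ∈ S then (1:ℝ) else 0) * if x ∈ S then 1 else 0)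
      = if x ∈ S then 1 else 0 := fun x => by by_cases h : x ∈ S <;> simp [h]
  rw [Finset.sum_congr rfl fun x _ => h1 x, Finset.sum_ite_mem, Finset.univ_inter,
    ← hS, Finset.card_eq_sum_ones S]
  push_cast
  rfl

lemma ddT_symm {m : ℕ} (S : Finset (Fin m)) :
    (dvec S * (dvec S)ᵀ)ᵀ = dvec S * (dvec S)ᵀ := by
  rw [Matrix.transpose_mul, Matrix.transpose_transpose]

lemma Dmat_ddT {m : ℕ} (S : Finset (Fin m)) :
    Dmat S * (dvec S * (dvec S)ᵀ) = dvec S * (dvec S)ᵀ := by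
  rw [← Matrix.mul_assoc, Dmat_dvec]

lemma ddT_Dmat {m : ℕ} (S : Finset (Fin m)) :
    (dvec S * (dvec S)ᵀ) * Dmat S = dvec S * (dvec S)ᵀ := by
  have := congrArg Matrix.transpose (Dmat_ddT S)
  rwa [Matrix.transpose_mul, ddT_symm, Dmat_symm] at this

lemma ddT_sq {m k : ℕ} (S : Finset (Fin m)) (hS : S.card = k) :
    (dvec S * (dvec S)ᵀ) * (dvec S * (dvec S)ᵀ) = (k : ℝ) • (dvec S * (dvec S)ᵀ) := by
  rw [Matrix.mul_assoc, ← Matrix.mul_assoc (dvec S)ᵀ, dvecT_dvec S hS,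
    Matrix.smul_mul, Matrix.one_mul, Matrix.mul_smul]

lemma Qmat_symm {m : ℕ} (S : Finset (Fin m)) (α : ℝ) (k : ℕ) :
    (Qmat S α k)ᵀ = Qmat S α k := by
  simp only [Qmat, Matrix.transpose_sub, Matrix.transpose_smul, Matrix.transpose_one,
    Dmat_symm, ddT_symm]

lemma Qmat_sq {m k : ℕ} (hk : 0 < k) (S : Finset (Fin m)) (hS : S.card = k) (α : ℝ) :
    Qmat S α k * Qmat S α k
      = 1 - (α * (2 - α)) • Dmat S + ((α / (k : ℝ)) * (3 * α - 2)) • (dvec S * (dvec S)ᵀ) := by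
  have hk' : (k : ℝ) ≠ 0 := Nat.cast_ne_zero.mpr hk.ne'
  simp only [Qmat, Matrix.sub_mul, Matrix.mul_sub, Matrix.one_mul, Matrix.mul_one,
    Matrix.smul_mul, Matrix.mul_smul, Dmat_sq, Dmat_ddT, ddT_Dmat, ddT_sq S hS]
  match_scalars <;> field_simp <;> ring

theorem stmt_1 (n m k : ℕ) (hk : 0 < k) (S : Finset (Fin m)) (hS : S.card = k)
    (α : ℝ) (hα0 : 0 < α) (hα1 : α < 2 / 3) (M' : Matrix (Fin n) (Fin m) ℝ) :
    frob (M' * Qmat S α k) ^ 2 =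
        frob M' ^ 2 - α * (2 - α) * frob (M' * Dmat S) ^ 2
          + (α / (k : ℝ)) * (3 * α - 2) * frob (M' * dvec S) ^ 2 ∧
      frob (M' * Qmat S α k) ^ 2 ≤ frob M' ^ 2 := by
  have hkR : (0 : ℝ) < (k : ℝ) := Nat.cast_pos.mpr hk
  have hD : Matrix.trace ((M' * Dmat S)ᵀ * (M' * Dmat S))
      = Matrix.trace ((M'ᵀ * M') * Dmat S) := by
    rw [Matrix.transpose_mul, Dmat_symm, Matrix.mul_assoc, ← Matrix.mul_assoc M'ᵀ,
      Matrix.trace_mul_comm, Matrix.mul_assoc, Dmat_sq]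
  have hP : Matrix.trace ((M' * dvec S)ᵀ * (M' * dvec S))
      = Matrix.trace ((M'ᵀ * M') * (dvec S * (dvec S)ᵀ)) := by
    rw [Matrix.transpose_mul, Matrix.mul_assoc, Matrix.trace_mul_comm,
      Matrix.mul_assoc]
    rw [← Matrix.mul_assoc, ← Matrix.mul_assoc, Matrix.mul_assoc (M'ᵀ * M')]
  have key : frob (M' * Qmat S α k) ^ 2 =
      frob M' ^ 2 - α * (2 - α) * frob (M' * Dmat S) ^ 2
        + (α / (k : ℝ)) * (3 * α - 2) * frob (M' * dvec S) ^ 2 := by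
    rw [frob_sq, frob_sq, frob_sq, frob_sq, hD, hP]
    rw [Matrix.transpose_mul, Qmat_symm, Matrix.mul_assoc, ← Matrix.mul_assoc M'ᵀ,
      Matrix.trace_mul_comm, Matrix.mul_assoc,
      Qmat_sq hk S hS α]
    simp only [Matrix.mul_add, Matrix.mul_sub, Matrix.mul_one, Matrix.mul_smul,
      Matrix.trace_add, Matrix.trace_sub, Matrix.trace_smul, smul_eq_mul]
  refine ⟨key, ?_⟩
  rw [key]
  have h1 : 0 ≤ α * (2 - α) * frob (M' * Dmat S) ^ 2 :=
    mul_nonneg (mul_nonneg hα0.le (by linarith)) (sq_nonneg _)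
  have h2 : (α / (k : ℝ)) * (3 * α - 2) * frob (M' * dvec S) ^ 2 ≤ 0 :=
    mul_nonpos_of_nonpos_of_nonneg
      (mul_nonpos_of_nonneg_of_nonpos (div_nonneg hα0.le hkR.le) (by linarith))
      (sq_nonneg _)
  linarith
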